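/- Let G be a finite group and let 0 → P̂₁ → F̂ → T̂ → 0 be a short exact sequence of G-lattices in which P̂₁ is a permutation G-lattice and F̂ is a flasque G-lattice. Then the induced map H¹(G, F̂) → H¹(G, T̂) is injective with image Ш¹_ω(G, T̂); in particular H¹(G, F̂) ≅ Ш¹_ω(G, T̂). -/

import Mathlib

/-- `f : G → M` is a 1-cocycle for the action of `G` on `M`. -/
def IsOneCocycle {G M : Type} [Group G] [AddCommGroup M] [DistribMulAction G M]
    (f : G → M) : Prop :=
  ∀ g h : G, f (g * h) = f g + g • f h

/-- `f : G → M` is a 1-coboundary for the action of `G` on `M`. -/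
def IsOneCoboundary {G M : Type} [Group G] [AddCommGroup M] [DistribMulAction G M]
    (f : G → M) : Prop :=
  ∃ m : M, ∀ g : G, f g = g • m - m

/-- `M` is a permutation `G`-lattice: a `ℤ[G]`-module admitting a finite `ℤ`-basis
permuted by the action of `G`. -/
def IsPermutationLattice (G M : Type) [Group G] [AddCommGroup M] [DistribMulAction G M] :
    Prop :=
  ∃ (ι : Type) (b : Module.Basis ι ℤ M), Finite ι ∧ ∀ (g : G) (i : ι), ∃ j : ι, g • b i = b j

/-- `M` is a flasque `G`-lattice: for every subgroup `H ≤ G` one has `H¹(H, M°) = 0`,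
where `M° = Hom_ℤ(M, ℤ)` carries the contragredient action `(g • φ) m = φ (g⁻¹ • m)`:
every 1-cocycle `H → M°` is a coboundary. -/
def IsFlasqueLattice (G M : Type) [Group G] [AddCommGroup M] [DistribMulAction G M] :
    Prop :=
  ∀ (H : Subgroup G) (f : H → (M →ₗ[ℤ] ℤ)),
    (∀ (g h : H) (m : M), f (g * h) m = f g m + f h ((g : G)⁻¹ • m)) →
    ∃ φ : M →ₗ[ℤ] ℤ, ∀ (g : H) (m : M), f g m = φ ((g : G)⁻¹ • m) - φ m


lemma perm_setup {G P : Type} [Group G] [AddCommGroup P] [DistribMulAction G P]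
    (hP : IsPermutationLattice G P) :
    ∃ (ι : Type) (b : Module.Basis ι ℤ P) (act : G → ι → ι), Nonempty (Fintype ι) ∧
      (∀ g i, g • b i = b (act g i)) ∧ (∀ i, act 1 i = i) ∧
      (∀ g h i, act (g * h) i = act g (act h i)) ∧
      (∀ g x i, b.repr (g • x) (act g i) = b.repr x i) := by
  classical
  obtain ⟨ι, b, hfin, hperm⟩ := hP
  choose act hact using hperm
  have binj : Function.Injective b := Module.Basis.injective b
  have h1 : ∀ i, act 1 i = i := fun i => binj (by rw [← hact, one_smul])
  have hmul : ∀ g h i, act (g * h) i = act g (act h i) := by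
    intro g h i
    apply binj
    rw [← hact, ← hact, ← hact, mul_smul]
  refine ⟨ι, b, act, ⟨@Fintype.ofFinite ι hfin⟩, hact, h1, hmul, ?_⟩
  intro g x i
  have hinj : Function.Injective (act g) := by
    intro i j hij
    have := congrArg (act g⁻¹) hij
    rwa [← hmul, ← hmul, inv_mul_cancel, h1, h1] at this
  let sl : P →ₗ[ℤ] P := (DistribMulAction.toAddMonoidHom P g).toIntLinearMap
  have : (b.coord (act g i)).comp sl = b.coord i := by
    apply b.ext
    intro k
    simp only [LinearMap.comp_apply, AddMonoidHom.coe_toIntLinearMap,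
      DistribMulAction.toAddMonoidHom_apply, sl]
    rw [hact, Module.Basis.coord_apply, Module.Basis.coord_apply, Module.Basis.repr_self, Module.Basis.repr_self,
      Finsupp.single_apply, Finsupp.single_apply]
    by_cases h : k = i
    · subst h; simp
    · rw [if_neg h, if_neg (fun hc => h (hinj hc))]
  have := congrFun (congrArg (fun (φ : P →ₗ[ℤ] ℤ) => (φ : P → ℤ)) this) x
  simpa [sl] using this


/-- Abstract orbit-wise coboundary lemma. -/
lemma lemQ {G X A : Type*} [Group G] [AddCommGroup A]
    (a : G → X → X) (ha1 : ∀ x, a 1 x = x)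
    (hamul : ∀ g h x, a (g * h) x = a g (a h x))
    (d : G → X → A)
    (hd : ∀ g h x, d (g * h) x = d h x + d g (a h x))
    (hfix : ∀ s x, a s x = x → d s x = 0) :
    ∃ q : X → A, ∀ g x, d g x = q x - q (a g x) := by
  classical
  have hinv : ∀ g x, a g⁻¹ (a g x) = x := by
    intro g x; rw [← hamul, inv_mul_cancel, ha1]
  -- setoid of orbits
  let s : Setoid X := ⟨fun x y => ∃ g, a g x = y, by
    constructor
    · intro x; exact ⟨1, ha1 x⟩
    · rintro x y ⟨g, rfl⟩; exact ⟨g⁻¹, hinv g x⟩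
    · rintro x y z ⟨g, rfl⟩ ⟨h, rfl⟩; exact ⟨h * g, hamul h g x⟩⟩
  let r : X → X := fun x => (Quotient.mk s x).out
  have hr : ∀ x, ∃ g, a g (r x) = x := by
    intro x
    have : s.r (r x) x := Quotient.exact (Quotient.out_eq (Quotient.mk s x))
    exact this
  have hrstab : ∀ g x, r (a g x) = r x := by
    intro g x
    have : Quotient.mk s (a g x) = Quotient.mk s x := Quotient.sound (Setoid.symm ⟨g, rfl⟩)
    simp only [r, this]
  choose gx hgx using hr
  refine ⟨fun x => -d (gx x) (r x), ?_⟩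
  intro g x
  have key : ∀ (h : G) (y : X), a h (r y) = y → d h (r y) = d (gx y) (r y) := by
    intro h y hy
    have hs : a ((gx y)⁻¹ * h) (r y) = r y := by
      rw [hamul]
      rw [hy]
      -- a (gx y)⁻¹ y = r y
      have := hgx y
      calc a (gx y)⁻¹ y = a (gx y)⁻¹ (a (gx y) (r y)) := by rw [this]
        _ = r y := hinv _ _
    have h0 : d ((gx y)⁻¹ * h) (r y) = 0 := hfix _ _ hs
    have : d (gx y * ((gx y)⁻¹ * h)) (r y)
        = d ((gx y)⁻¹ * h) (r y) + d (gx y) (a ((gx y)⁻¹ * h) (r y)) := hd _ _ _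
    rw [mul_inv_cancel_left] at this
    rw [this, h0, hs, zero_add]
  have e1 : d (g * gx x) (r x) = d (gx x) (r x) + d g x := by
    have := hd g (gx x) (r x)
    rw [hgx x] at this; exact this
  have e2 : d (g * gx x) (r (a g x)) = d (gx (a g x)) (r (a g x)) := by
    apply key
    rw [hrstab, hamul, hgx x]
  rw [hrstab] at e2
  have : d (gx (a g x)) (r x) = d (gx x) (r x) + d g x := by rw [← e2, e1]
  simp only [neg_sub_neg]
  rw [hrstab g x]
  -- goal : d g x = d (gx (a g x)) (r x) - d (gx x) (r x)  (after rearranging)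
  rw [this]
  abel
lemma cocycle_one {G M : Type} [Group G] [AddCommGroup M] [DistribMulAction G M]
    {p : G → M} (hp : IsOneCocycle p) : p 1 = 0 := by
  have := hp 1 1
  rw [one_mul, one_smul] at this
  exact (left_eq_add.mp this)

lemma permCocycleCoboundary {G P : Type} [Group G] [Finite G] [AddCommGroup P]
    [DistribMulAction G P] (hP : IsPermutationLattice G P)
    (p : G → P) (hp : IsOneCocycle p) : IsOneCoboundary p := by
  classical
  obtain ⟨ι, b, act, ⟨hfin⟩, hact, h1, hmul, hrepr⟩ := perm_setup hP
  have hinvact : ∀ g i, act g (act g⁻¹ i) = i := by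
    intro g i; rw [← hmul, mul_inv_cancel, h1]
  set d : G → ι → ℤ := fun g i => b.repr (p g) (act g i) with hd_def
  have hd : ∀ g h i, d (g * h) i = d h i + d g (act h i) := by
    intro g h i
    simp only [hd_def]
    rw [hp g h, map_add, Finsupp.add_apply, hmul]
    rw [hrepr g (p h) (act h i)]
    ring
  have hfix : ∀ s i, act s i = i → d s i = 0 := by
    intro s i hs
    have hpow : ∀ k : ℕ, act (s ^ k) i = i := by
      intro k; induction k with
      | zero => rw [pow_zero, h1]
      | succ k ih => rw [pow_succ, hmul, hs, ih]
    have hdk : ∀ k : ℕ, d (s ^ k) i = (k : ℤ) * d s i := by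
      intro k; induction k with
      | zero =>
        rw [pow_zero]
        simp only [hd_def]
        rw [cocycle_one hp]
        simp
      | succ k ih =>
        have h2 := hd (s ^ k) s i
        rw [← pow_succ, hs] at h2
        rw [h2, ih]
        push_cast
        ring
    have hord := pow_orderOf_eq_one s
    have := hdk (orderOf s)
    rw [hord] at this
    have h1' : d 1 i = 0 := by
      simp only [hd_def]
      rw [cocycle_one hp]; simp
    rw [h1'] at this
    have : (orderOf s : ℤ) * d s i = 0 := this.symm
    rcases mul_eq_zero.mp this with h | h
    · exact absurd h (by exact_mod_cast (orderOf_pos s).ne')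
    · exact h
  obtain ⟨q, hq⟩ := lemQ act h1 hmul d hd hfix
  refine ⟨b.equivFun.symm q, ?_⟩
  intro g
  apply b.repr.injective
  ext j
  have hm : ∀ i, b.repr (b.equivFun.symm q) i = q i := by
    intro i
    have := b.equivFun.apply_symm_apply q
    rw [← congrFun this i, Module.Basis.equivFun_apply]
  have hj : j = act g (act g⁻¹ j) := (hinvact g j).symm
  rw [map_sub, Finsupp.sub_apply]
  calc b.repr (p g) j = d g (act g⁻¹ j) := by conv_lhs => rw [hj]
    _ = q (act g⁻¹ j) - q (act g (act g⁻¹ j)) := hq g (act g⁻¹ j)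
    _ = b.repr (g • b.equivFun.symm q) j - b.repr (b.equivFun.symm q) j := by
        have h3 : b.repr (g • b.equivFun.symm q) j = q (act g⁻¹ j) := by
          have h4 := hrepr g (b.equivFun.symm q) (act g⁻¹ j)
          rw [hinvact] at h4
          rw [h4, hm]
        rw [h3, hm, hinvact]
lemma dual_sat_imp_sat {M : Type} [AddCommGroup M] [Module.Free ℤ M] [Module.Finite ℤ M]
    (u : M →ₗ[ℤ] M)
    (hdual : ∀ (φ : M →ₗ[ℤ] ℤ) (k : ℤ), k ≠ 0 → (∃ ψ : M →ₗ[ℤ] ℤ, k • φ = ψ.comp u) →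
      ∃ ψ : M →ₗ[ℤ] ℤ, φ = ψ.comp u)
    (x : M) (k : ℤ) (hk : k ≠ 0) (hx : k • x ∈ LinearMap.range u) :
    x ∈ LinearMap.range u := by
  classical
  set N := LinearMap.range u with hN
  obtain ⟨r, snf⟩ := N.smithNormalForm (Module.Free.chooseBasis ℤ M)
  -- each diagonal entry is a unit
  have hunit : ∀ i : Fin r, IsUnit (snf.a i) := by
    intro i₀
    have hane : snf.a i₀ ≠ 0 := by
      intro h0
      have := snf.snf i₀
      rw [h0, zero_smul] at this
      exact Module.Basis.ne_zero snf.bN i₀ (Subtype.ext this)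
    have coordN : ∀ y : N, snf.bM.coord (snf.f i₀) (y : M) = snf.a i₀ * snf.bN.coord i₀ y := by
      have : (snf.bM.coord (snf.f i₀)).comp N.subtype = snf.a i₀ • snf.bN.coord i₀ := by
        apply snf.bN.ext
        intro i
        simp only [LinearMap.comp_apply, Submodule.coe_subtype, LinearMap.smul_apply,
          smul_eq_mul]
        rw [snf.snf i, map_smul, Module.Basis.coord_apply, Module.Basis.coord_apply, Module.Basis.repr_self,
          Module.Basis.repr_self, Finsupp.single_apply, Finsupp.single_apply]
        by_cases h : i = i₀
        · subst h; simp
        · rw [if_neg (fun hc => h (snf.f.injective hc)), if_neg h]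
          simp
      intro y
      have := congrFun (congrArg (fun (φ : N →ₗ[ℤ] ℤ) => (φ : N → ℤ)) this) y
      simp only [LinearMap.comp_apply] at this; exact this
    set χ : M →ₗ[ℤ] ℤ := (snf.bN.coord i₀).comp u.rangeRestrict with hχ
    have hclaim : snf.a i₀ • χ = (snf.bM.coord (snf.f i₀)).comp u := by
      ext m
      have h1 := coordN (u.rangeRestrict m)
      simp only [LinearMap.smul_apply, smul_eq_mul, LinearMap.comp_apply, hχ]
      rw [← h1]
      congr 1
    obtain ⟨ψ, hψ⟩ := hdual χ (snf.a i₀) hane ⟨snf.bM.coord (snf.f i₀), hclaim⟩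
    obtain ⟨m₀, hm₀⟩ : ∃ m₀, u m₀ = (snf.bN i₀ : M) := (snf.bN i₀).2
    have hrr : u.rangeRestrict m₀ = snf.bN i₀ := Subtype.ext (by simpa using hm₀)
    have hval1 : χ m₀ = 1 := by
      rw [hχ]
      simp only [LinearMap.comp_apply]
      rw [hrr, Module.Basis.coord_apply, Module.Basis.repr_self]
      simp
    have hval2 : χ m₀ = snf.a i₀ * ψ (snf.bM (snf.f i₀)) := by
      rw [hψ]
      simp only [LinearMap.comp_apply]
      rw [hm₀, snf.snf i₀, map_smul]
      simp [mul_comm]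
    exact IsUnit.of_mul_eq_one _ (by rw [← hval2, hval1])
  have hmem : ∀ i : Fin r, snf.bM (snf.f i) ∈ N := by
    intro i
    obtain ⟨w, hw⟩ := hunit i
    have h1 : (snf.bN i : M) ∈ N := (snf.bN i).2
    rw [snf.snf i] at h1
    have : ((w⁻¹ : ℤˣ) : ℤ) • (snf.a i • snf.bM (snf.f i)) ∈ N := Submodule.smul_mem _ _ h1
    rwa [smul_smul, ← hw, Units.inv_mul, one_smul] at this
  have hz : ∀ j, j ∉ Set.range snf.f → snf.bM.repr x j = 0 := by
    intro j hj
    have h0 : snf.bM.repr (k • x) j = 0 := snf.repr_eq_zero_of_notMem_range ⟨k • x, hx⟩ hj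
    rw [map_smul] at h0
    simpa [hk] using h0
  have : Fintype (Module.Free.ChooseBasisIndex ℤ M) := Fintype.ofFinite _
  have hx' : x = ∑ j, snf.bM.repr x j • snf.bM j := (snf.bM.sum_repr x).symm
  rw [hx']
  apply Submodule.sum_mem
  intro j _
  by_cases hj : j ∈ Set.range snf.f
  · obtain ⟨i, rfl⟩ := hj
    exact Submodule.smul_mem _ _ (hmem i)
  · rw [hz j hj, zero_smul]
    exact Submodule.zero_mem _
section Part2Core

variable {G F : Type} [Group G] [Finite G] [AddCommGroup F] [DistribMulAction G F]

/-- The `ℤ`-linear map given by the action of `g`. -/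
noncomputable def Lg (F : Type) [AddCommGroup F] [DistribMulAction G F] (g : G) : F →ₗ[ℤ] F :=
  (DistribMulAction.toAddMonoidHom F g).toIntLinearMap

@[simp] lemma Lg_apply (g : G) (m : F) : Lg F g m = g • m := rfl

lemma sum_range_orderOf {A : Type} [AddCommMonoid A] (y : G) (v : G → A)
    [Fintype (Subgroup.zpowers y)] :
    ∑ c : Subgroup.zpowers y, v c = ∑ j ∈ Finset.range (orderOf y), v (y ^ j) := by
  rw [Finset.sum_range fun j => v (y ^ j)]
  exact Fintype.sum_equiv (finEquivZPowers (isOfFinOrder_of_finite y)).symm _ _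
    (fun ⟨c, hc⟩ => by
      obtain ⟨k, hk⟩ := (finEquivZPowers (isOfFinOrder_of_finite y)).surjective ⟨c, hc⟩
      rw [← hk, Equiv.symm_apply_apply, finEquivZPowers_apply])

lemma flasque_cyclic_vanish [Module.Free ℤ F] [Module.Finite ℤ F]
    (hF : IsFlasqueLattice G F) (g₀ : G) (x : F)
    (hx : ∑ k ∈ Finset.range (orderOf g₀), g₀ ^ k • x = 0) :
    ∃ m : F, x = g₀ • m - m := by
  classical
  set n := orderOf g₀ with hn_def
  have hn : 0 < n := orderOf_pos g₀
  set u : F →ₗ[ℤ] F := Lg F g₀ - LinearMap.id with hu_def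
  have hu_apply : ∀ m : F, u m = g₀ • m - m := fun m => rfl
  set Nn : F →ₗ[ℤ] F := ∑ k ∈ Finset.range n, Lg F (g₀ ^ k) with hNn_def
  have hNn_apply : ∀ m : F, Nn m = ∑ k ∈ Finset.range n, g₀ ^ k • m := by
    intro m; rw [hNn_def, LinearMap.sum_apply]; rfl
  have huNn : ∀ m : F, u (Nn m) = 0 := by
    intro m
    rw [hu_apply, hNn_apply, Finset.smul_sum]
    have : ∀ k, g₀ • g₀ ^ k • m = g₀ ^ (k + 1) • m := by
      intro k; rw [← mul_smul, ← pow_succ']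
    simp_rw [this]
    rw [← Finset.sum_sub_distrib, Finset.sum_range_sub (f := fun k => g₀ ^ k • m) n]
    rw [hn_def, pow_orderOf_eq_one, pow_zero, one_smul, sub_self]
  -- `n • x ∈ range u`
  have hrange_smul : ∀ w ∈ LinearMap.range u, g₀ • w ∈ LinearMap.range u := by
    rintro w ⟨y, rfl⟩
    exact ⟨g₀ • y, by rw [hu_apply, hu_apply, smul_sub]⟩
  have hpowmem : ∀ k : ℕ, g₀ ^ k • x - x ∈ LinearMap.range u := by
    intro k; induction k with
    | zero => simp
    | succ k ih =>
      have h1 : g₀ ^ (k + 1) • x - x = g₀ • (g₀ ^ k • x - x) + u x := by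
        rw [hu_apply, smul_sub, ← mul_smul, ← pow_succ']
        abel
      rw [h1]
      exact Submodule.add_mem _ (hrange_smul _ ih) ⟨x, rfl⟩
  have hkx : (n : ℤ) • x ∈ LinearMap.range u := by
    have h1 : (n : ℤ) • x = ∑ k ∈ Finset.range n, (x - g₀ ^ k • x) := by
      rw [Finset.sum_sub_distrib, hx, sub_zero, Finset.sum_const, Finset.card_range]
      simp
    rw [h1]
    exact Submodule.sum_mem _ fun k _ =>
      (by simpa using Submodule.neg_mem _ (hpowmem k) : x - g₀ ^ k • x ∈ LinearMap.range u)
  -- the dual saturation hypothesis, from flasqueness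
  have hdual : ∀ (φ : F →ₗ[ℤ] ℤ) (k : ℤ), k ≠ 0 → (∃ ψ : F →ₗ[ℤ] ℤ, k • φ = ψ.comp u) →
      ∃ ψ : F →ₗ[ℤ] ℤ, φ = ψ.comp u := by
    rintro φ k hk ⟨ψ, hψ⟩
    -- φ ∘ Nn = 0
    have hφN : φ.comp Nn = 0 := by
      have h1 : k • φ.comp Nn = 0 := by
        ext m
        have : (k • φ) (Nn m) = ψ (u (Nn m)) := by rw [hψ]; rfl
        rw [huNn] at this
        simpa using this
      ext m
      have := congrFun (congrArg (fun (χ : F →ₗ[ℤ] ℤ) => (χ : F → ℤ)) h1) m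
      simp only [LinearMap.smul_apply, smul_eq_mul, LinearMap.zero_apply] at this ⊢
      rcases mul_eq_zero.mp this with h | h
      · exact absurd h hk
      · exact h
    -- the cocycle on the cyclic subgroup generated by `g₀`
    set C := Subgroup.zpowers g₀ with hC_def
    set T : ℕ → (F →ₗ[ℤ] ℤ) := fun a => ∑ j ∈ Finset.range a, φ.comp (Lg F (g₀⁻¹ ^ j))
      with hT_def
    have hT1 : T 1 = φ := by
      rw [hT_def]; ext m; simp
    have hTadd : ∀ a c : ℕ, T (a + c) = T a + (T c).comp (Lg F (g₀⁻¹ ^ a)) := by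
      intro a c
      induction c with
      | zero => ext m; simp [hT_def]
      | succ c ih =>
        have h1 : T (a + (c + 1)) = T (a + c) + φ.comp (Lg F (g₀⁻¹ ^ (a + c))) := by
          simp only [hT_def]
          rw [← add_assoc, Finset.sum_range_succ]
        have h2 : T (c + 1) = T c + φ.comp (Lg F (g₀⁻¹ ^ c)) := by
          simp only [hT_def]
          rw [Finset.sum_range_succ]
        rw [h1, ih, h2]
        ext m
        simp only [LinearMap.add_apply, LinearMap.comp_apply, Lg_apply, LinearMap.add_comp]
        rw [← mul_smul, ← pow_add, add_comm c a]
        abel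
    have hTn : T n = 0 := by
      ext m
      rw [hT_def]
      simp only [LinearMap.coe_sum, Finset.sum_apply, LinearMap.comp_apply, Lg_apply,
        LinearMap.zero_apply]
      rw [← map_sum]
      have horder : orderOf g₀⁻¹ = n := by rw [orderOf_inv]
      have hC : Fintype (Subgroup.zpowers g₀⁻¹) := Fintype.ofFinite _
      have h1 : ∑ j ∈ Finset.range n, g₀⁻¹ ^ j • m
          = ∑ c : Subgroup.zpowers g₀⁻¹, (c : G) • m := by
        rw [sum_range_orderOf g₀⁻¹ (fun c => c • m), horder]
      have hC2 : Fintype (Subgroup.zpowers g₀) := Fintype.ofFinite _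
      have h2 : ∑ j ∈ Finset.range n, g₀ ^ j • m
          = ∑ c : Subgroup.zpowers g₀, (c : G) • m := by
        rw [sum_range_orderOf g₀ (fun c => c • m), hn_def]
      have h3 : ∑ c : Subgroup.zpowers g₀⁻¹, (c : G) • m
          = ∑ c : Subgroup.zpowers g₀, (c : G) • m := by
        apply Fintype.sum_equiv (Equiv.subtypeEquiv (Equiv.refl G)
          (fun c => by rw [Equiv.refl_apply, Subgroup.zpowers_inv]))
        intro c; rfl
      rw [h1, h3, ← h2]
      have := congrFun (congrArg (fun (χ : F →ₗ[ℤ] ℤ) => (χ : F → ℤ)) hφN) m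
      simpa [hNn_apply] using this
    have hTmul : ∀ s : ℕ, T (n * s) = 0 := by
      intro s
      induction s with
      | zero => ext m; simp [hT_def]
      | succ s ih =>
        rw [Nat.mul_succ, hTadd, ih, hTn]
        ext m; simp
    have hTone : ∀ a t : ℕ, g₀ ^ t = 1 → T (a + t) = T a := by
      intro a t ht
      obtain ⟨s, rfl⟩ := orderOf_dvd_of_pow_eq_one ht
      rw [hTadd, hTmul]
      ext m; simp
    have hTper : ∀ a c : ℕ, g₀ ^ a = g₀ ^ c → T a = T c := by
      have key : ∀ a c : ℕ, a ≤ c → g₀ ^ a = g₀ ^ c → T a = T c := by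
        intro a c hle he
        obtain ⟨t, rfl⟩ := Nat.exists_eq_add_of_le hle
        rw [pow_add] at he
        have ht : g₀ ^ t = 1 := by
          have h2 : g₀ ^ a * g₀ ^ t = g₀ ^ a * 1 := by rw [mul_one]; exact he.symm
          exact mul_left_cancel h2
        exact (hTone a t ht).symm
      intro a c he
      rcases le_total a c with h | h
      · exact key a c h he
      · exact (key c a h he.symm).symm
    have hex : ∀ c : C, ∃ k : ℕ, g₀ ^ k = (c : G) := by
      intro c
      exact mem_powers_iff_mem_zpowers.mpr c.2
    choose e he using hex
    set w : C → (F →ₗ[ℤ] ℤ) := fun c => T (e c) with hw_def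
    have hcoc : ∀ (c d : C) (m : F), w (c * d) m = w c m + w d ((c : G)⁻¹ • m) := by
      intro c d m
      have h1 : g₀ ^ e (c * d) = g₀ ^ (e c + e d) := by
        rw [he (c * d), pow_add, he c, he d]; rfl
      have h2 : T (e (c * d)) = T (e c + e d) := hTper _ _ h1
      rw [hw_def]
      simp only
      rw [h2, hTadd]
      simp only [LinearMap.add_apply, LinearMap.comp_apply, Lg_apply]
      rw [inv_pow, he c]
    obtain ⟨φ₀, hφ₀⟩ := hF C w hcoc
    have hg₀C : (⟨g₀, Subgroup.mem_zpowers g₀⟩ : C) = ⟨g₀, Subgroup.mem_zpowers g₀⟩ := rfl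
    have hkey : ∀ m : F, φ m = φ₀ (g₀⁻¹ • m) - φ₀ m := by
      intro m
      have h1 := hφ₀ ⟨g₀, Subgroup.mem_zpowers g₀⟩ m
      have h2 : w (⟨g₀, Subgroup.mem_zpowers g₀⟩ : C) = T 1 := by
        rw [hw_def]
        exact hTper _ _ (by rw [he ⟨g₀, Subgroup.mem_zpowers g₀⟩, pow_one])
      rw [h2, hT1] at h1
      exact h1
    refine ⟨-(φ₀.comp (Lg F g₀⁻¹)), ?_⟩
    ext m
    simp only [LinearMap.comp_apply, LinearMap.neg_apply, Lg_apply]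
    rw [hu_apply, hkey m, smul_sub, ← mul_smul, inv_mul_cancel, one_smul, map_sub]
    abel
  have := dual_sat_imp_sat u hdual x (n : ℤ) (by exact_mod_cast hn.ne') hkx
  obtain ⟨m, hm⟩ := this
  exact ⟨m, by rw [← hm, hu_apply]⟩

end Part2Core
lemma cocycle_zpow {G M : Type} [Group G] [AddCommGroup M] [DistribMulAction G M]
    (f : G → M) (hf : IsOneCocycle f) (g₀ : G) (m : M) (hm : f g₀ = g₀ • m - m) :
    ∀ k : ℤ, f (g₀ ^ k) = g₀ ^ k • m - m := by
  have hinv : f g₀⁻¹ = -(g₀⁻¹ • f g₀) := by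
    have h1 := hf g₀⁻¹ g₀
    rw [inv_mul_cancel, cocycle_one hf] at h1
    exact eq_neg_of_add_eq_zero_left h1.symm
  intro k
  induction k using Int.induction_on with
  | zero => rw [zpow_zero, cocycle_one hf, one_smul, sub_self]
  | succ k ih =>
    have h1 : (g₀ : G) ^ ((k : ℤ) + 1) = g₀ ^ (k : ℤ) * g₀ := by rw [zpow_add_one]
    rw [h1, hf, ih, hm, smul_sub, mul_smul]
    abel
  | pred k ih =>
    have h1 : (g₀ : G) ^ (-(k : ℤ) - 1) = g₀ ^ (-(k : ℤ)) * g₀⁻¹ := by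
      rw [← zpow_neg_one, ← zpow_add, sub_eq_add_neg]
    rw [h1, hf, ih, hinv, hm, smul_sub, ← mul_smul g₀⁻¹ g₀ m, inv_mul_cancel, one_smul,
      smul_neg, smul_sub, mul_smul]
    abel
lemma permTwoCocycleCoboundary {G P : Type} [Group G] [Finite G] [AddCommGroup P]
    [DistribMulAction G P] (hP : IsPermutationLattice G P)
    (z : G → G → P)
    (hz : ∀ g h k, z g h + z (g * h) k = g • z h k + z g (h * k))
    (hcyc : ∀ g₀ : G, ∃ p : Subgroup.zpowers g₀ → P,
      ∀ a b : Subgroup.zpowers g₀, z a b = p a + (a : G) • p b - p (a * b)) :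
    ∃ c : G → P, ∀ g h, z g h = c g + g • c h - c (g * h) := by
  classical
  have : Fintype G := Fintype.ofFinite G
  obtain ⟨ι, b, act, ⟨hfin⟩, hact, h1, hmul, hrepr⟩ := perm_setup hP
  have hinv : ∀ (g : G) (i : ι), act g (act g⁻¹ i) = i := by
    intro g i; rw [← hmul, mul_inv_cancel, h1]
  have hinv' : ∀ (g : G) (i : ι), act g⁻¹ (act g i) = i := by
    intro g i; rw [← hmul, inv_mul_cancel, h1]
  set n := Fintype.card G with hn_def
  have hn0 : (n : ℚ) ≠ 0 := by
    have : 0 < n := Fintype.card_pos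
    exact_mod_cast this.ne'
  set ζ : G → G → ι → ℤ := fun g h i => b.repr (z g h) i with hζ_def
  set B : G → P := fun g => ∑ k : G, z g k with hB_def
  have hB : ∀ g h : G, n • z g h + B (g * h) = g • B h + B g := by
    intro g h
    have e1 : ∑ k : G, (z g h + z (g * h) k) = ∑ k : G, (g • z h k + z g (h * k)) :=
      Finset.sum_congr rfl fun k _ => hz g h k
    rw [Finset.sum_add_distrib, Finset.sum_add_distrib, Finset.sum_const,
      Finset.card_univ, ← Finset.smul_sum] at e1
    have e2 : ∑ k : G, z g (h * k) = B g :=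
      Fintype.sum_equiv (Equiv.mulLeft h) _ _ fun k => rfl
    rw [e2] at e1
    exact e1
  set βq : G → ι → ℚ := fun g i => (b.repr (B g) i : ℚ) / n with hβq_def
  have hrepr' : ∀ (g : G) (x : P) (i : ι), b.repr (g • x) i = b.repr x (act g⁻¹ i) := by
    intro g x i
    have := hrepr g x (act g⁻¹ i)
    rwa [hinv g i] at this
  have hβ : ∀ g h i, (ζ g h i : ℚ) = βq g i + βq h (act g⁻¹ i) - βq (g * h) i := by
    intro g h i
    have e3 := congrArg (fun x : P => b.repr x i) (hB g h)
    simp only [map_add, map_nsmul, Finsupp.add_apply, Finsupp.smul_apply, smul_eq_mul] at e3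
    rw [hrepr' g (B h) i] at e3
    have e5 : (n : ℚ) * (ζ g h i : ℚ) + (b.repr (B (g * h)) i : ℚ)
        = (b.repr (B h) (act g⁻¹ i) : ℚ) + (b.repr (B g) i : ℚ) := by
      exact_mod_cast e3
    have e6 : βq g i + βq h (act g⁻¹ i) - βq (g * h) i
        = ((b.repr (B g) i : ℚ) + (b.repr (B h) (act g⁻¹ i) : ℚ)
            - (b.repr (B (g * h)) i : ℚ)) / n := by
      simp only [hβq_def]; ring
    rw [e6, eq_div_iff hn0]
    linarith [e5]
  -- the cyclic hypothesis, transformed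
  have hcyc' : ∀ g₀ : G, ∃ (pp : Subgroup.zpowers g₀ → P) (q : ι → ℚ),
      ∀ (c : Subgroup.zpowers g₀) (i : ι),
        βq (c : G) i = (b.repr (pp c) i : ℚ) + q i - q (act (c : G)⁻¹ i) := by
    intro g₀
    obtain ⟨p, hp⟩ := hcyc g₀
    have : Fintype (Subgroup.zpowers g₀) := Fintype.ofFinite _
    set w : Subgroup.zpowers g₀ → ι → ℚ := fun c i => βq (c : G) i - (b.repr (p c) i : ℚ) with hw_def
    have hw : ∀ (c d : Subgroup.zpowers g₀) (i : ι), w (c * d) i = w c i + w d (act (c : G)⁻¹ i) := by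
      intro c d i
      have e6 := hβ (c : G) (d : G) i
      have e7 : ζ (c : G) (d : G) i
          = b.repr (p c) i + b.repr (p d) (act (c : G)⁻¹ i) - b.repr (p (c * d)) i := by
        simp only [hζ_def]
        rw [hp c d]
        rw [map_sub, map_add, Finsupp.sub_apply, Finsupp.add_apply,
          hrepr' (c : G) (p d) i]
      rw [e7] at e6
      push_cast at e6
      simp only [hw_def]
      have hcd : ((c * d : Subgroup.zpowers g₀) : G) = (c : G) * (d : G) := rfl
      rw [hcd]
      linarith [e6]
    set W : ι → ℚ := fun i => ∑ d : Subgroup.zpowers g₀, w d i with hW_def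
    have hWkey : ∀ (c : Subgroup.zpowers g₀) (i : ι), (Fintype.card (Subgroup.zpowers g₀) : ℚ) * w c i = W i - W (act (c : G)⁻¹ i) := by
      intro c i
      have e8 : ∑ d : Subgroup.zpowers g₀, w (c * d) i = W i :=
        Fintype.sum_equiv (Equiv.mulLeft c) _ _ fun d => rfl
      have e9 : ∑ d : Subgroup.zpowers g₀, (w c i + w d (act (c : G)⁻¹ i)) = W i := by
        rw [← e8]
        exact Finset.sum_congr rfl fun d _ => (hw c d i).symm
      rw [Finset.sum_add_distrib, Finset.sum_const, Finset.card_univ] at e9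
      have e10 : (Fintype.card (Subgroup.zpowers g₀) : ℚ) * w c i + W (act (c : G)⁻¹ i) = W i := by
        rw [← e9]
        simp [nsmul_eq_mul, hW_def]
      linarith [e10]
    have hcC : (0 : ℚ) < Fintype.card (Subgroup.zpowers g₀) := by exact_mod_cast Fintype.card_pos
    refine ⟨p, fun i => W i / (Fintype.card (Subgroup.zpowers g₀) : ℚ), ?_⟩
    intro c i
    have hwk := hWkey c i
    have hwc : w c i = W i / (Fintype.card (Subgroup.zpowers g₀) : ℚ) - W (act (c : G)⁻¹ i) / (Fintype.card (Subgroup.zpowers g₀) : ℚ) := by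
      rw [div_sub_div_same, eq_div_iff (ne_of_gt hcC), mul_comm]
      linarith [hwk]
    have hw2 : βq (c : G) i - (b.repr (p c) i : ℚ) = w c i := rfl
    show βq (c : G) i = (b.repr (p c) i : ℚ)
        + W i / (Fintype.card (Subgroup.zpowers g₀) : ℚ) - W (act (c : G)⁻¹ i) / (Fintype.card (Subgroup.zpowers g₀) : ℚ)
    linarith [hwc, hw2]
  -- pass to ℚ/ℤ
  set A := ℚ ⧸ AddSubgroup.zmultiples (1 : ℚ) with hA_def
  set pr : ℚ →+ A := QuotientAddGroup.mk' (AddSubgroup.zmultiples (1 : ℚ)) with hpr_def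
  have hpr0 : ∀ x : ℚ, (∃ m : ℤ, (m : ℚ) = x) → pr x = 0 := by
    rintro x ⟨m, rfl⟩
    rw [hpr_def, QuotientAddGroup.mk'_apply, QuotientAddGroup.eq_zero_iff]
    exact ⟨m, by simp⟩
  have hpr0' : ∀ x : ℚ, pr x = 0 → ∃ m : ℤ, (m : ℚ) = x := by
    intro x hx
    rw [hpr_def, QuotientAddGroup.mk'_apply, QuotientAddGroup.eq_zero_iff] at hx
    obtain ⟨m, hm⟩ := hx
    exact ⟨m, by simpa using hm⟩
  set d : G → ι → A := fun g i => pr (βq g (act g i)) with hd_def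
  have hd : ∀ g h i, d (g * h) i = d h i + d g (act h i) := by
    intro g h i
    have e10 := hβ g h (act (g * h) i)
    have e11 : act g⁻¹ (act (g * h) i) = act h i := by
      rw [hmul, hinv']
    rw [e11] at e10
    have e12 : pr ((ζ g h (act (g * h) i) : ℚ)) = 0 := hpr0 _ ⟨_, rfl⟩
    rw [e10] at e12
    rw [map_sub, map_add] at e12
    have e13 : pr (βq g (act (g * h) i)) = d g (act h i) := by
      simp only [hd_def]
      rw [hmul]
    rw [e13] at e12
    simp only [hd_def]
    have := sub_eq_zero.mp e12
    rw [← this]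
    abel
  have hfix : ∀ s i, act s i = i → d s i = 0 := by
    intro s i hs
    obtain ⟨pp, q, hq⟩ := hcyc' s
    have e14 := hq ⟨s, Subgroup.mem_zpowers s⟩ i
    have e15 : act s⁻¹ i = i := by
      conv_lhs => rw [← hs]
      rw [hinv']
    rw [e15] at e14
    simp only [hd_def, hs]
    rw [e14]
    have e16 : (b.repr (pp ⟨s, Subgroup.mem_zpowers s⟩) i : ℚ) + q i - q i
        = ((b.repr (pp ⟨s, Subgroup.mem_zpowers s⟩) i : ℤ) : ℚ) := by ring
    rw [e16]
    exact hpr0 _ ⟨_, rfl⟩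
  obtain ⟨Q, hQ⟩ := lemQ act h1 hmul d hd hfix
  have hlift : ∀ i : ι, ∃ y : ℚ, pr y = Q i := fun i =>
    QuotientAddGroup.mk'_surjective _ (Q i)
  choose ql hql using hlift
  have hγint : ∀ (g : G) (i : ι), ∃ m : ℤ, (m : ℚ) = βq g i - ql (act g⁻¹ i) + ql i := by
    intro g i
    apply hpr0'
    have e16 : pr (βq g i) = Q (act g⁻¹ i) - Q i := by
      have := hQ g (act g⁻¹ i)
      simp only [hd_def] at this
      rw [hinv g i] at this
      rw [this]
    rw [map_add, map_sub, e16, hql, hql]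
    abel
  choose γ hγ using hγint
  refine ⟨fun g => b.equivFun.symm fun i => γ g i, ?_⟩
  intro g h
  have hm : ∀ (v : ι → ℤ) (i : ι), b.repr (b.equivFun.symm v) i = v i := by
    intro v i
    have := b.equivFun.apply_symm_apply v
    rw [← congrFun this i, Module.Basis.equivFun_apply]
  apply b.repr.injective
  ext i
  rw [map_sub, map_add, Finsupp.sub_apply, Finsupp.add_apply]
  show ζ g h i = b.repr (b.equivFun.symm fun i => γ g i) i
      + b.repr (g • b.equivFun.symm fun i => γ h i) i
      - b.repr (b.equivFun.symm fun i => γ (g * h) i) i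
  rw [hrepr' g _ i, hm, hm, hm]
  have e17 : ((ζ g h i : ℤ) : ℚ) = ((γ g i + γ h (act g⁻¹ i) - γ (g * h) i : ℤ) : ℚ) := by
    push_cast
    rw [hγ g i, hγ h (act g⁻¹ i), hγ (g * h) i]
    have e18 : act (g * h)⁻¹ i = act h⁻¹ (act g⁻¹ i) := by
      rw [mul_inv_rev, hmul]
    rw [e18, hβ g h i]
    ring
  exact_mod_cast e17

/-- Let `G` be a finite group and `0 → P̂₁ → F̂ → T̂ → 0` a short exact sequence of
`G`-lattices with `P̂₁` a permutation lattice and `F̂` flasque.  Then the induced map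
`H¹(G, F̂) → H¹(G, T̂)` is injective and its image is exactly
`Ш¹_ω(G, T̂)` (the classes whose restriction to every cyclic subgroup vanishes); in
particular `H¹(G, F̂) ≅ Ш¹_ω(G, T̂)`. -/
theorem H1_flasque_isoOnto_sha1_omega
    {G P1 F T : Type} [Group G] [Finite G]
    [AddCommGroup P1] [DistribMulAction G P1] [Module.Free ℤ P1] [Module.Finite ℤ P1]
    [AddCommGroup F] [DistribMulAction G F] [Module.Free ℤ F] [Module.Finite ℤ F]
    [AddCommGroup T] [DistribMulAction G T] [Module.Free ℤ T] [Module.Finite ℤ T]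
    (j : P1 →+ F) (π : F →+ T)
    (hjG : ∀ (g : G) (x : P1), j (g • x) = g • j x)
    (hπG : ∀ (g : G) (x : F), π (g • x) = g • π x)
    (hjinj : Function.Injective j) (hπsurj : Function.Surjective π)
    (hex : Function.Exact j π)
    (hP1 : IsPermutationLattice G P1) (hF : IsFlasqueLattice G F) :
    -- the induced map `H¹(G, F̂) → H¹(G, T̂)` is injective …
    (∀ f : G → F, IsOneCocycle f → IsOneCoboundary (fun g : G => π (f g)) →
      IsOneCoboundary f) ∧
    -- … its image lands in `Ш¹_ω(G, T̂)` …
    (∀ f : G → F, IsOneCocycle f → ∀ g₀ : G,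
      IsOneCoboundary (fun h : Subgroup.zpowers g₀ => π (f (h : G)))) ∧
    -- … and every class of `Ш¹_ω(G, T̂)` is in the image.
    (∀ t : G → T, IsOneCocycle t →
      (∀ g₀ : G, IsOneCoboundary (fun h : Subgroup.zpowers g₀ => t (h : G))) →
      ∃ f : G → F, IsOneCocycle f ∧ IsOneCoboundary (fun g : G => π (f g) - t g)) := by
  classical
  refine ⟨?_, ?_, ?_⟩
  · -- Part 1: injectivity
    rintro f hf ⟨m, hm⟩
    simp only at hm
    obtain ⟨m', hm'⟩ := hπsurj m
    have hf'mem : ∀ g, f g - (g • m' - m') ∈ Set.range j := by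
      intro g
      apply (hex _).mp
      rw [map_sub, map_sub, hπG, hm', hm g, sub_self]
    choose p hp using hf'mem
    have hpcoc : IsOneCocycle p := by
      intro g h
      apply hjinj
      rw [map_add, hp, hp]
      have : j (g • p h) = g • j (p h) := hjG g (p h)
      rw [this, hp, hf g h, mul_smul, smul_sub, smul_sub]
      abel
    obtain ⟨m₀, hm₀⟩ := permCocycleCoboundary hP1 p hpcoc
    refine ⟨j m₀ + m', ?_⟩
    intro g
    have h1 := hp g
    rw [hm₀ g, map_sub, hjG] at h1
    have h2 : f g = (g • j m₀ - j m₀) + (g • m' - m') :=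
      sub_eq_iff_eq_add.mp h1.symm
    rw [h2, smul_add]
    abel
  · -- Part 2: image lands in Sha
    intro f hf g₀
    have hx : ∑ k ∈ Finset.range (orderOf g₀), g₀ ^ k • f g₀ = 0 := by
      have hpow : ∀ k : ℕ, f (g₀ ^ k) = ∑ i ∈ Finset.range k, g₀ ^ i • f g₀ := by
        intro k; induction k with
        | zero => rw [pow_zero, cocycle_one hf, Finset.range_zero, Finset.sum_empty]
        | succ k ih => rw [pow_succ, hf, ih, Finset.sum_range_succ]
      have h1 := hpow (orderOf g₀)
      rw [pow_orderOf_eq_one, cocycle_one hf] at h1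
      exact h1.symm
    obtain ⟨m, hm⟩ := flasque_cyclic_vanish hF g₀ (f g₀) hx
    refine ⟨π m, ?_⟩
    rintro ⟨c, hc⟩
    obtain ⟨k, rfl⟩ := Subgroup.mem_zpowers_iff.mp hc
    simp only
    rw [cocycle_zpow f hf g₀ m hm k, map_sub, hπG]
    rfl
  · -- Part 3: surjectivity onto Sha
    intro t ht hsha
    choose f₀ hf₀ using fun g => hπsurj (t g)
    have hzmem : ∀ g h : G, f₀ g + g • f₀ h - f₀ (g * h) ∈ Set.range j := by
      intro g h
      apply (hex _).mp
      rw [map_sub, map_add, hπG, hf₀, hf₀, hf₀, ht g h, sub_self]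
    choose z hzspec using hzmem
    have hz : ∀ g h k, z g h + z (g * h) k = g • z h k + z g (h * k) := by
      intro g h k
      apply hjinj
      simp only [map_add, hzspec, hjG, smul_add, smul_sub, mul_smul, ← mul_assoc]
      abel
    have hcyc : ∀ g₀ : G, ∃ p : Subgroup.zpowers g₀ → P1,
        ∀ a c : Subgroup.zpowers g₀, z a c = p a + (a : G) • p c - p (a * c) := by
      intro g₀
      obtain ⟨mT, hmT⟩ := hsha g₀
      simp only at hmT
      obtain ⟨mF, hmF⟩ := hπsurj mT
      have hmem : ∀ c : Subgroup.zpowers g₀,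
          f₀ (c : G) - ((c : G) • mF - mF) ∈ Set.range j := by
        intro c
        apply (hex _).mp
        rw [map_sub, map_sub, hπG, hmF, hf₀, hmT c]
        exact sub_eq_zero.mpr rfl
      choose p hps using hmem
      refine ⟨p, ?_⟩
      intro a c
      apply hjinj
      simp only [map_sub, map_add, hzspec, hjG, hps, Subgroup.coe_mul, smul_sub, mul_smul]
      abel
    obtain ⟨c, hc⟩ := permTwoCocycleCoboundary hP1 z hz hcyc
    refine ⟨fun g => f₀ g - j (c g), ?_, 0, ?_⟩
    · intro g h
      have h2 := hzspec g h
      rw [hc g h, map_sub, map_add, hjG] at h2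
      have h6 : (j (c g) + g • j (c h) - j (c (g * h))) - (f₀ g + g • f₀ h - f₀ (g * h)) = 0 :=
        sub_eq_zero.mpr h2
      refine eq_of_sub_eq_zero ?_
      have h7 : f₀ (g * h) - j (c (g * h)) - ((f₀ g - j (c g)) + g • (f₀ h - j (c h)))
          = (j (c g) + g • j (c h) - j (c (g * h))) - (f₀ g + g • f₀ h - f₀ (g * h)) := by
        rw [smul_sub]; abel
      rw [h7, h6]
    · intro g
      simp only
      rw [map_sub]
      have h8 : π (j (c g)) = 0 := (hex _).mpr ⟨c g, rfl⟩
      rw [h8, hf₀]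
      simp
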